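/- For all real x > 0, exp(arcsinh(1/sinh x)) > 2/x. -/

import Mathlib

open Real

lemma sinh_lt_mul_cosh (t : ℝ) (ht : 0 < t) : Real.sinh t < t * Real.cosh t := by
  have h : StrictMonoOn (fun s : ℝ => s * Real.cosh s - Real.sinh s) (Set.Ici 0) := by
    apply strictMonoOn_of_deriv_pos (convex_Ici 0)
    · fun_prop
    · intro s hs
      rw [interior_Ici] at hs
      have : HasDerivAt (fun s : ℝ => s * Real.cosh s - Real.sinh s)
          (1 * Real.cosh s + s * Real.sinh s - Real.cosh s) s := by
        exact ((hasDerivAt_id s).mul (Real.hasDerivAt_cosh s)).sub (Real.hasDerivAt_sinh s)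
      rw [this.deriv]
      have hsinh : 0 < Real.sinh s := Real.sinh_pos_iff.2 hs
      have hs' : 0 < s := hs
      nlinarith [mul_pos hs' hsinh]
  have := h (Set.self_mem_Ici) (Set.mem_Ici.2 ht.le) ht
  simpa using this

theorem exp_arsinh_inv_sinh_gt (x : ℝ) (hx : 0 < x) :
    Real.exp (Real.arsinh (1 / Real.sinh x)) > 2 / x := by
  have hs : 0 < Real.sinh x := Real.sinh_pos_iff.2 hx
  have hc : 0 < Real.cosh x := Real.cosh_pos x
  rw [Real.exp_arsinh]
  have hsq : Real.sqrt (1 + (1 / Real.sinh x) ^ 2) = Real.cosh x / Real.sinh x := by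
    rw [show 1 + (1 / Real.sinh x) ^ 2 = (Real.cosh x / Real.sinh x) ^ 2 by
      field_simp
      nlinarith [Real.cosh_sq x]]
    exact Real.sqrt_sq (by positivity)
  rw [hsq]
  rw [gt_iff_lt, div_lt_iff₀ hx, ← add_div, div_mul_eq_mul_div, lt_div_iff₀ hs]
  set t := x / 2 with htdef
  have hx2 : x = 2 * t := by rw [htdef]; ring
  have ht : 0 < t := by rw [htdef]; linarith
  have h1 : Real.sinh t < t * Real.cosh t := sinh_lt_mul_cosh t ht
  have hct : 0 < Real.cosh t := Real.cosh_pos t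
  rw [hx2, Real.cosh_two_mul, Real.sinh_two_mul]
  nlinarith [mul_lt_mul_of_pos_right h1 (by positivity : (0:ℝ) < 4 * Real.cosh t), Real.cosh_sq t]
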